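/- Let A, B be distinct n×n complex positive definite matrices, and let μ_1 ≥ … ≥ μ_n be the eigenvalues of A^{-1} ♯ B. Then for all real numbers t < s: μ_n^{2s−2t} · (A ♮_t B) ⪯ A ♮_s B and A ♮_s B ⪯ μ_1^{2s−2t} · (A ♮_t B), where ⪯ is the near order. -/

import Mathlib

open scoped ComplexOrder Matrix

noncomputable section

/-- Real power of a (positive definite) matrix via the continuous functional calculus. -/
def mpow {n : ℕ} (A : Matrix (Fin n) (Fin n) ℂ) (t : ℝ) : Matrix (Fin n) (Fin n) ℂ :=
  cfc (fun x : ℝ => x ^ t) A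

/-- The matrix logarithm of a (positive definite) matrix via the continuous functional calculus. -/
def mlog {n : ℕ} (A : Matrix (Fin n) (Fin n) ℂ) : Matrix (Fin n) (Fin n) ℂ :=
  cfc Real.log A

/-- The metric geometric mean `A ♯ₜ B = A^{1/2} (A^{-1/2} B A^{-1/2})^t A^{1/2}`.
`A ♯ B` is `gmean A B (1/2)`. -/
def gmean {n : ℕ} (A B : Matrix (Fin n) (Fin n) ℂ) (t : ℝ) : Matrix (Fin n) (Fin n) ℂ :=
  mpow A (1/2) * mpow (mpow A (-(1/2)) * B * mpow A (-(1/2))) t * mpow A (1/2)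

/-- The Loewner order: `A ≤ B` iff `B - A` is positive semidefinite. -/
def LoewnerLE {n : ℕ} (A B : Matrix (Fin n) (Fin n) ℂ) : Prop :=
  (B - A).PosSemidef

/-- The near order: `A ⪯ B` iff `I ≤ A⁻¹ ♯ B` in the Loewner order. -/
def NearLE {n : ℕ} (A B : Matrix (Fin n) (Fin n) ℂ) : Prop :=
  LoewnerLE 1 (gmean A⁻¹ B (1/2))

/-- The spectral geometric mean `A ♮ₜ B = (A⁻¹ ♯ B)^t A (A⁻¹ ♯ B)^t`. -/
def smean {n : ℕ} (A B : Matrix (Fin n) (Fin n) ℂ) (t : ℝ) : Matrix (Fin n) (Fin n) ℂ :=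
  mpow (gmean A⁻¹ B (1/2)) t * A * mpow (gmean A⁻¹ B (1/2)) t

/-- The Wasserstein mean `A ◇ₜ B = [(1-t)I + t(A⁻¹ ♯ B)] A [(1-t)I + t(A⁻¹ ♯ B)]`. -/
def wmean {n : ℕ} (A B : Matrix (Fin n) (Fin n) ℂ) (t : ℝ) : Matrix (Fin n) (Fin n) ℂ :=
  (((1 - t : ℝ) : ℂ) • (1 : Matrix (Fin n) (Fin n) ℂ) + ((t : ℝ) : ℂ) • gmean A⁻¹ B (1/2)) * A *
    (((1 - t : ℝ) : ℂ) • (1 : Matrix (Fin n) (Fin n) ℂ) + ((t : ℝ) : ℂ) • gmean A⁻¹ B (1/2))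

/-- The arithmetic mean `A ∇ₜ B = (1-t)A + tB`. -/
def amean {n : ℕ} (A B : Matrix (Fin n) (Fin n) ℂ) (t : ℝ) : Matrix (Fin n) (Fin n) ℂ :=
  ((1 - t : ℝ) : ℂ) • A + ((t : ℝ) : ℂ) • B

/-- The matrix absolute value `|X| = (XᴴX)^{1/2}`. -/
def matAbs {n : ℕ} (X : Matrix (Fin n) (Fin n) ℂ) : Matrix (Fin n) (Fin n) ℂ :=
  mpow (Xᴴ * X) (1/2)

/-- The eigenvalues of a Hermitian matrix listed in nonincreasing order:
`eigDesc hA i` is `λ_{i+1}(A)`, so `eigDesc hA 0 = λ₁(A) ≥ eigDesc hA 1 = λ₂(A) ≥ ⋯`. -/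
def eigDesc {n : ℕ} {A : Matrix (Fin n) (Fin n) ℂ} (hA : A.IsHermitian) : Fin n → ℝ :=
  fun i => (hA.eigenvalues ∘ Tuple.sort hA.eigenvalues) i.rev

section Helpers
variable {n : ℕ}

lemma contOnFin {s : Set ℝ} (hs : s.Finite) (f : ℝ → ℝ) : ContinuousOn f s := by
  have := hs.to_subtype
  rw [continuousOn_iff_continuous_restrict]
  exact continuous_of_discreteTopology

lemma contOnSpec (f : ℝ → ℝ) (M : Matrix (Fin n) (Fin n) ℂ) :
    ContinuousOn f (spectrum ℝ M) := contOnFin M.finite_real_spectrum f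

lemma spec_pos {M : Matrix (Fin n) (Fin n) ℂ} (hM : M.PosDef) :
    ∀ x ∈ spectrum ℝ M, 0 < x := by
  intro x hx
  rw [hM.isHermitian.spectrum_real_eq_range_eigenvalues] at hx
  obtain ⟨i, rfl⟩ := hx
  exact hM.eigenvalues_pos i

lemma mpow_isHermitian {A : Matrix (Fin n) (Fin n) ℂ} (t : ℝ) :
    (mpow A t).IsHermitian := cfc_predicate _ A

lemma mpow_add {A : Matrix (Fin n) (Fin n) ℂ} (hA : A.PosDef) (s t : ℝ) :
    mpow A s * mpow A t = mpow A (s + t) := by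
  rw [mpow, mpow, mpow, ← cfc_mul _ _ A (contOnSpec _ A) (contOnSpec _ A)]
  exact cfc_congr fun x hx => (Real.rpow_add (spec_pos hA x hx) s t).symm

lemma mpow_zero {A : Matrix (Fin n) (Fin n) ℂ} (hA : A.IsHermitian) : mpow A 0 = 1 := by
  rw [mpow]
  simp only [Real.rpow_zero]
  exact cfc_const_one ℝ A

lemma mpow_one {A : Matrix (Fin n) (Fin n) ℂ} (hA : A.PosDef) : mpow A 1 = A := by
  rw [mpow]
  have : cfc (fun x : ℝ => x ^ (1:ℝ)) A = cfc (fun x : ℝ => x) A :=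
    cfc_congr fun x _ => Real.rpow_one x
  rw [this]; exact cfc_id' ℝ A hA.isHermitian

lemma posDef_conj {M B : Matrix (Fin n) (Fin n) ℂ} (hM : M.PosDef) (hB : IsUnit B) :
    (B * M * Bᴴ).PosDef := by
  refine Matrix.PosDef.of_dotProduct_mulVec_pos ?_ ?_
  · exact Matrix.isHermitian_mul_mul_conjTranspose B hM.isHermitian
  intro x hx
  have hx' : Bᴴ *ᵥ x ≠ 0 := by
    have hinj : Function.Injective (Bᴴ.mulVec) :=
      Matrix.mulVec_injective_iff_isUnit.mpr ((Matrix.isUnit_conjTranspose (A := B)).mpr hB)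
    intro hcon
    apply hx
    have h0 : Bᴴ *ᵥ (0 : Fin n → ℂ) = 0 := Matrix.mulVec_zero _
    exact hinj (hcon.trans h0.symm)
  have h2 := hM.dotProduct_mulVec_pos hx'
  rw [Matrix.star_mulVec, Matrix.conjTranspose_conjTranspose] at h2
  rw [Matrix.mul_assoc, ← Matrix.mulVec_mulVec, Matrix.dotProduct_mulVec, ← Matrix.mulVec_mulVec]
  exact h2

lemma mpow_posDef {A : Matrix (Fin n) (Fin n) ℂ} (hA : A.PosDef) (t : ℝ) :
    (mpow A t).PosDef := by
  rw [mpow, hA.isHermitian.cfc_eq, Matrix.IsHermitian.cfc]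
  have hdiag : (Matrix.diagonal (RCLike.ofReal ∘ (fun x : ℝ => x ^ t) ∘ hA.isHermitian.eigenvalues)
      : Matrix (Fin n) (Fin n) ℂ).PosDef := by
    rw [Matrix.posDef_diagonal_iff]
    intro i
    simpa using Real.rpow_pos_of_pos (hA.eigenvalues_pos i) t
  have hU : IsUnit ((Matrix.IsHermitian.eigenvectorUnitary hA.isHermitian : Matrix (Fin n) (Fin n) ℂ)) := by
    apply Matrix.isUnit_iff_isUnit_det _ |>.mpr
    have := (Matrix.IsHermitian.eigenvectorUnitary hA.isHermitian).2
    rw [Matrix.mem_unitaryGroup_iff] at this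
    exact Matrix.isUnit_det_of_right_inverse this
  simpa [Matrix.star_eq_conjTranspose] using posDef_conj hdiag hU

lemma mpow_mul_neg {A : Matrix (Fin n) (Fin n) ℂ} (hA : A.PosDef) (t : ℝ) :
    mpow A t * mpow A (-t) = 1 := by
  rw [mpow_add hA, add_neg_cancel, mpow_zero hA.isHermitian]

lemma mpow_inv_eq {A : Matrix (Fin n) (Fin n) ℂ} (hA : A.PosDef) (t : ℝ) :
    (mpow A t)⁻¹ = mpow A (-t) :=
  Matrix.inv_eq_right_inv (mpow_mul_neg hA t)

lemma inv_eq_mpow {A : Matrix (Fin n) (Fin n) ℂ} (hA : A.PosDef) :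
    A⁻¹ = mpow A (-1) := by
  have := mpow_inv_eq hA 1
  rwa [mpow_one hA] at this

lemma mpow_mpow {A : Matrix (Fin n) (Fin n) ℂ} (hA : A.PosDef) (s t : ℝ) :
    mpow (mpow A s) t = mpow A (s * t) := by
  simp only [mpow]
  have h := cfc_comp (fun x : ℝ => x ^ t) (fun x : ℝ => x ^ s) A hA.isHermitian
      (contOnFin ((Matrix.finite_real_spectrum (A := A)).image _) _) (contOnSpec _ A)
  rw [← h]
  refine cfc_congr fun x hx => ?_
  have hx0 := spec_pos hA x hx
  simp only [Function.comp_apply]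
  rw [← Real.rpow_mul hx0.le]

lemma mpow_inv' {A : Matrix (Fin n) (Fin n) ℂ} (hA : A.PosDef) (t : ℝ) :
    mpow A⁻¹ t = mpow A (-t) := by
  rw [inv_eq_mpow hA, mpow_mpow hA, neg_one_mul]

lemma mpow_mul_self_half {S : Matrix (Fin n) (Fin n) ℂ} (hS : S.PosDef) :
    mpow (S * S) (1/2) = S := by
  have h1 : S * S = cfc (fun x : ℝ => x * x) S := by
    have hid : cfc (fun x : ℝ => x) S = S := cfc_id' ℝ S hS.isHermitian
    have h := cfc_mul (fun x : ℝ => x) (fun x : ℝ => x) S (contOnSpec _ S) (contOnSpec _ S)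
    rw [hid] at h
    exact h.symm
  rw [mpow, h1]
  have h := cfc_comp (fun x : ℝ => x ^ (1/2 : ℝ)) (fun x : ℝ => x * x) S hS.isHermitian
      (contOnFin ((Matrix.finite_real_spectrum (A := S)).image _) _) (contOnSpec _ S)
  rw [← h]
  have h2 : cfc ((fun x : ℝ => x ^ (1/2 : ℝ)) ∘ fun x : ℝ => x * x) S
      = cfc (fun x : ℝ => x) S := by
    refine cfc_congr fun x hx => ?_
    have hx0 := spec_pos hS x hx
    simp only [Function.comp_apply]
    rw [← Real.sqrt_eq_rpow, Real.sqrt_mul_self hx0.le]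
  have hid : cfc (fun x : ℝ => x) S = S := cfc_id' ℝ S hS.isHermitian
  rw [h2, hid]

lemma gmean_posDef {A B : Matrix (Fin n) (Fin n) ℂ} (hA : A.PosDef) (hB : B.PosDef) (t : ℝ) :
    (gmean A B t).PosDef := by
  unfold gmean
  have h1 : (mpow A (-(1/2)) * B * mpow A (-(1/2))).PosDef := by
    have := posDef_conj hB (mpow_posDef hA (-(1/2))).isUnit
    rwa [mpow_isHermitian (-(1/2)) (A := A)] at this
  have h2 := mpow_posDef h1 t
  have h3 := posDef_conj h2 (mpow_posDef hA (1/2)).isUnit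
  rwa [mpow_isHermitian (1/2) (A := A)] at h3

lemma gmean_half_eq {X Y G : Matrix (Fin n) (Fin n) ℂ} (hX : X.PosDef) (hG : G.PosDef)
    (hY : G * X * G = Y) : gmean X⁻¹ Y (1/2) = G := by
  have h2 := mpow_posDef hX (1/2)
  have hsqr : mpow X (1/2) * mpow X (1/2) = X := by
    rw [mpow_add hX, show (1/2 : ℝ) + 1/2 = 1 by norm_num, mpow_one hX]
  have hS : mpow X (1/2) * Y * mpow X (1/2)
      = (mpow X (1/2) * G * mpow X (1/2)) * (mpow X (1/2) * G * mpow X (1/2)) := by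
    have hsqr' : ∀ Z : Matrix (Fin n) (Fin n) ℂ,
        mpow X (1/2) * (mpow X (1/2) * Z) = X * Z := fun Z => by
      rw [← Matrix.mul_assoc, hsqr]
    rw [← hY]
    simp only [Matrix.mul_assoc, hsqr']
  have hSpos : (mpow X (1/2) * G * mpow X (1/2)).PosDef := by
    have := posDef_conj hG h2.isUnit
    rwa [mpow_isHermitian (1/2) (A := X)] at this
  have hinv1 : mpow X (-(1/2)) * mpow X (1/2) = 1 := by
    rw [mpow_add hX, show (-(1/2) : ℝ) + 1/2 = 0 by norm_num, mpow_zero hX.isHermitian]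
  have hinv2 : mpow X (1/2) * mpow X (-(1/2)) = 1 := by
    rw [mpow_add hX, show (1/2 : ℝ) + -(1/2) = 0 by norm_num, mpow_zero hX.isHermitian]
  unfold gmean
  rw [mpow_inv' hX, mpow_inv' hX, neg_neg, hS, mpow_mul_self_half hSpos]
  simp only [Matrix.mul_assoc]
  rw [hinv2, Matrix.mul_one, ← Matrix.mul_assoc, hinv1, Matrix.one_mul]

lemma cfc_posSemidef {C : Matrix (Fin n) (Fin n) ℂ} (hC : C.IsHermitian) (f : ℝ → ℝ)
    (hf : ∀ x ∈ spectrum ℝ C, 0 ≤ f x) : (cfc f C).PosSemidef := by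
  have h1 : cfc f C = cfc (fun x => Real.sqrt (f x) * Real.sqrt (f x)) C :=
    cfc_congr fun x hx => (Real.mul_self_sqrt (hf x hx)).symm
  have h2 := cfc_mul (fun x => Real.sqrt (f x)) (fun x => Real.sqrt (f x)) C
    (contOnSpec _ C) (contOnSpec _ C)
  have hS : (cfc (fun x => Real.sqrt (f x)) C).IsHermitian := cfc_predicate _ C
  rw [h1, h2]
  nth_rewrite 1 [← hS]
  exact Matrix.posSemidef_conjTranspose_mul_self _

lemma posDef_smul {M : Matrix (Fin n) (Fin n) ℂ} (hM : M.PosDef) {r : ℝ} (hr : 0 < r) :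
    (((r : ℝ) : ℂ) • M).PosDef := by
  refine Matrix.PosDef.of_dotProduct_mulVec_pos ?_ ?_
  · show (((r : ℝ) : ℂ) • M)ᴴ = ((r : ℝ) : ℂ) • M
    rw [Matrix.conjTranspose_smul (((r : ℝ) : ℂ)) M, hM.isHermitian.eq]
    simp [Complex.conj_ofReal]
  intro x hx
  have h := hM.dotProduct_mulVec_pos hx
  have : star x ⬝ᵥ (((r : ℝ) : ℂ) • M) *ᵥ x = ((r : ℝ) : ℂ) * (star x ⬝ᵥ M *ᵥ x) := by
    rw [Matrix.smul_mulVec]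
    simp [dotProduct_smul, smul_eq_mul]
  rw [this]
  have hr' : (0 : ℂ) < ((r : ℝ) : ℂ) := by exact_mod_cast hr
  exact mul_pos hr' h

lemma key_one_le {C : Matrix (Fin n) (Fin n) ℂ} (hC : C.PosDef) (c r : ℝ)
    (hcx : ∀ x ∈ spectrum ℝ C, 1 ≤ c * x ^ r) :
    (((c : ℝ) : ℂ) • mpow C r - 1).PosSemidef := by
  have hCh := hC.isHermitian
  have e1 : cfc (fun x : ℝ => c * x ^ r) C = c • cfc (fun x : ℝ => x ^ r) C :=
    cfc_const_mul c _ C (contOnSpec _ C)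
  have e2 := cfc_sub (fun x : ℝ => c * x ^ r) (fun _ : ℝ => 1) C
    (contOnSpec _ C) (contOnSpec _ C)
  have e3 : cfc (fun _ : ℝ => (1:ℝ)) C = 1 := cfc_const_one ℝ C
  have goal_eq : ((c : ℂ)) • mpow C r - 1 = cfc (fun x : ℝ => c * x ^ r - 1) C := by
    rw [e2, e3, e1, mpow, Complex.coe_smul]
  rw [goal_eq]
  exact cfc_posSemidef hCh _ (fun x hx => by linarith [hcx x hx])

lemma conj_formula {C A : Matrix (Fin n) (Fin n) ℂ} (hC : C.PosDef) (a b g cx : ℝ) :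
    (((g : ℝ) : ℂ) • mpow C b) * ((((cx : ℝ) : ℂ)) • (mpow C a * A * mpow C a))
      * (((g : ℝ) : ℂ) • mpow C b)
    = (((g * cx * g : ℝ) : ℂ)) • (mpow C (b + a) * A * mpow C (a + b)) := by
  have hmat : mpow C b * (mpow C a * A * mpow C a) * mpow C b
      = mpow C (b + a) * A * mpow C (a + b) := by
    rw [← mpow_add hC b a, ← mpow_add hC a b]
    simp only [Matrix.mul_assoc]
  rw [← hmat]
  simp only [Matrix.smul_mul, Matrix.mul_smul, smul_smul]
  congr 1
  push_cast
  ring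

lemma smean_posDef {A B : Matrix (Fin n) (Fin n) ℂ} (hA : A.PosDef) (hB : B.PosDef) (t : ℝ) :
    (smean A B t).PosDef := by
  unfold smean
  have hC : (gmean A⁻¹ B (1/2)).PosDef := gmean_posDef hA.inv hB (1/2)
  have h1 := mpow_posDef hC t
  have h2 := posDef_conj hA h1.isUnit
  rwa [mpow_isHermitian t] at h2

end Helpers

/-- for distinct `A, B` with `μ₁ ≥ ⋯ ≥ μₙ` the eigenvalues of `A⁻¹ ♯ B`
(so `μₙ = ⨅ i, μ i` and `μ₁ = ⨆ i, μ i`), for all `t < s`: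
`μₙ^{2s−2t} (A ♮ₜ B) ⪯ A ♮ₛ B ⪯ μ₁^{2s−2t} (A ♮ₜ B)`. -/
theorem smean_near_order_range {n : ℕ} (A B : Matrix (Fin n) (Fin n) ℂ)
    (hA : A.PosDef) (hB : B.PosDef) (hAB : A ≠ B)
    (h : (gmean A⁻¹ B (1/2)).IsHermitian) (t s : ℝ) (hts : t < s) :
    NearLE ((((⨅ i, h.eigenvalues i) ^ (2 * s - 2 * t) : ℝ) : ℂ) • smean A B t)
        (smean A B s) ∧
    NearLE (smean A B s)
        ((((⨆ i, h.eigenvalues i) ^ (2 * s - 2 * t) : ℝ) : ℂ) • smean A B t) := by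
  rcases Nat.eq_zero_or_pos n with h0 | hpos
  · subst h0
    exact absurd (by funext i j; exact i.elim0 : A = B) hAB
  haveI : Nonempty (Fin n) := ⟨⟨0, hpos⟩⟩
  have hC : (gmean A⁻¹ B (1/2)).PosDef := gmean_posDef hA.inv hB (1/2)
  set C := gmean A⁻¹ B (1/2) with hCdef
  have hsmean : ∀ r : ℝ, smean A B r = mpow C r * A * mpow C r := fun r => rfl
  have heig : ∀ i, 0 < h.eigenvalues i := fun i => hC.eigenvalues_pos i
  set μn := ⨅ i, h.eigenvalues i with hμn
  set μ1 := ⨆ i, h.eigenvalues i with hμ1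
  have hμn_pos : 0 < μn := by
    obtain ⟨i, hi⟩ := exists_eq_ciInf_of_finite (f := h.eigenvalues)
    rw [hμn, ← hi]; exact heig i
  have hμ1_pos : 0 < μ1 := by
    obtain ⟨i, hi⟩ := exists_eq_ciSup_of_finite (f := h.eigenvalues)
    rw [hμ1, ← hi]; exact heig i
  have hspec : ∀ x ∈ spectrum ℝ C, μn ≤ x ∧ x ≤ μ1 := by
    intro x hx
    rw [h.spectrum_real_eq_range_eigenvalues] at hx
    obtain ⟨i, rfl⟩ := hx
    exact ⟨ciInf_le (Finite.bddBelow_range _) i, le_ciSup (Finite.bddAbove_range _) i⟩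
  have hst : (0:ℝ) < s - t := by linarith
  constructor
  · -- lower bound
    show LoewnerLE 1 (gmean (((μn ^ (2*s-2*t) : ℝ) : ℂ) • smean A B t)⁻¹ (smean A B s) (1/2))
    have hXpos : ((((μn ^ (2*s-2*t) : ℝ) : ℂ)) • smean A B t).PosDef :=
      posDef_smul (smean_posDef hA hB t) (Real.rpow_pos_of_pos hμn_pos _)
    have hGpos : ((((μn ^ (t-s) : ℝ) : ℂ)) • mpow C (s-t)).PosDef :=
      posDef_smul (mpow_posDef hC (s-t)) (Real.rpow_pos_of_pos hμn_pos _)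
    have hY : ((((μn ^ (t-s) : ℝ) : ℂ)) • mpow C (s-t))
        * ((((μn ^ (2*s-2*t) : ℝ) : ℂ)) • smean A B t)
        * ((((μn ^ (t-s) : ℝ) : ℂ)) • mpow C (s-t)) = smean A B s := by
      rw [hsmean t, conj_formula hC t (s-t) _ _]
      have hscal : μn ^ (t-s) * μn ^ (2*s-2*t) * μn ^ (t-s) = 1 := by
        rw [← Real.rpow_add hμn_pos, ← Real.rpow_add hμn_pos,
          show (t-s) + (2*s-2*t) + (t-s) = 0 by ring, Real.rpow_zero]
      rw [hscal, show (s-t) + t = s by ring, show t + (s-t) = s by ring, hsmean s]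
      simp
    rw [gmean_half_eq hXpos hGpos hY]
    show ((((μn ^ (t-s) : ℝ) : ℂ)) • mpow C (s-t) - 1).PosSemidef
    apply key_one_le hC
    intro x hx
    have hxpos := spec_pos hC x hx
    have hle := (hspec x hx).1
    rw [show t - s = -(s-t) by ring, Real.rpow_neg hμn_pos.le, mul_comm,
      ← div_eq_mul_inv, le_div_iff₀ (Real.rpow_pos_of_pos hμn_pos _), one_mul]
    exact Real.rpow_le_rpow hμn_pos.le hle hst.le
  · -- upper bound
    show LoewnerLE 1 (gmean (smean A B s)⁻¹ ((((μ1 ^ (2*s-2*t) : ℝ) : ℂ)) • smean A B t) (1/2))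
    have hXpos : (smean A B s).PosDef := smean_posDef hA hB s
    have hGpos : ((((μ1 ^ (s-t) : ℝ) : ℂ)) • mpow C (t-s)).PosDef :=
      posDef_smul (mpow_posDef hC (t-s)) (Real.rpow_pos_of_pos hμ1_pos _)
    have hY : ((((μ1 ^ (s-t) : ℝ) : ℂ)) • mpow C (t-s))
        * (smean A B s)
        * ((((μ1 ^ (s-t) : ℝ) : ℂ)) • mpow C (t-s))
        = (((μ1 ^ (2*s-2*t) : ℝ) : ℂ)) • smean A B t := by
      have hone : smean A B s = (((1:ℝ):ℂ)) • smean A B s := by simp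
      rw [hone, hsmean s, conj_formula hC s (t-s) _ _]
      have hscal : μ1 ^ (s-t) * 1 * μ1 ^ (s-t) = μ1 ^ (2*s-2*t) := by
        rw [mul_one, ← Real.rpow_add hμ1_pos, show (s-t) + (s-t) = 2*s-2*t by ring]
      rw [hscal, show (t-s) + s = t by ring, show s + (t-s) = t by ring, hsmean t]
    rw [gmean_half_eq hXpos hGpos hY]
    show ((((μ1 ^ (s-t) : ℝ) : ℂ)) • mpow C (t-s) - 1).PosSemidef
    apply key_one_le hC
    intro x hx
    have hxpos := spec_pos hC x hx
    have hle := (hspec x hx).2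
    rw [show t - s = -(s-t) by ring, Real.rpow_neg hxpos.le, ← div_eq_mul_inv,
      le_div_iff₀ (Real.rpow_pos_of_pos hxpos _), one_mul]
    exact Real.rpow_le_rpow hxpos.le hle hst.le
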